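/- If the energy–momentum endomorphism Q is positive semidefinite (i.e. ⟨λ, Qλ⟩ ≥ 0 for every λ ∈ ℂ⁴), then E₀² ≥ L² − 2·V². -/

import Mathlib

open Matrix Complex ComplexOrder

lemma trace_pow_herm {n : Type*} [Fintype n] [DecidableEq n] {A : Matrix n n ℂ}
    (hA : A.IsHermitian) (k : ℕ) :
    (A ^ k).trace = ((∑ i, hA.eigenvalues i ^ k : ℝ) : ℂ) := by
  set U : Matrix n n ℂ := (hA.eigenvectorUnitary : Matrix n n ℂ) with hUdef
  set D : Matrix n n ℂ := diagonal (RCLike.ofReal ∘ hA.eigenvalues) with hDdef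
  have hU : star U * U = 1 := hA.eigenvectorUnitary.2.1
  have hU2 : U * star U = 1 := hA.eigenvectorUnitary.2.2
  have hUA : star U * A = D * star U := by
    have h : star U * A * U = D := by
      have h0 := hA.conjStarAlgAut_star_eigenvectorUnitary
      rwa [Unitary.conjStarAlgAut_star_apply] at h0
    calc star U * A = star U * A * (U * star U) := by rw [hU2, Matrix.mul_one]
    _ = (star U * A * U) * star U := by noncomm_ring
    _ = D * star U := by rw [h]
  have key : A ^ k = U * D ^ k * star U := by
    induction k with
    | zero => simpa using hU2.symm
    | succ m ih =>
        calc A ^ (m+1) = (U * D ^ m * star U) * A := by rw [pow_succ, ih]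
        _ = U * D ^ m * (star U * A) := by noncomm_ring
        _ = U * D ^ m * (D * star U) := by rw [hUA]
        _ = U * D ^ (m+1) * star U := by rw [pow_succ]; noncomm_ring
  rw [key, Matrix.trace_mul_cycle, hU, Matrix.one_mul,
    hDdef, Matrix.diagonal_pow, Matrix.trace_diagonal]
  push_cast
  simp [Function.comp]

lemma amgm3 {x y z e : ℝ} (hx : 0 ≤ x) (hy : 0 ≤ y) (hz : 0 ≤ z)
    (h : x + y + z ≤ 3 * e) : x * y * z ≤ e ^ 3 := by
  have he : 0 ≤ e := by linarith
  have h27 : 27 * (x * y * z) ≤ (x + y + z) ^ 3 := by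
    nlinarith [mul_nonneg hx (sq_nonneg (y - z)), mul_nonneg hy (sq_nonneg (x - z)),
      mul_nonneg hz (sq_nonneg (x - y)), mul_nonneg (mul_nonneg hx hy) hz]
  have h2 : (x + y + z) ^ 3 ≤ (3 * e) ^ 3 := by
    apply pow_le_pow_left₀ (by linarith) h
  nlinarith


/-- The energy–momentum endomorphism `Q` of an asymptotically anti-de Sitter
initial data set, as a 4×4 complex matrix. -/
noncomputable def QMatrix (E₀ c₁ c₂ c₃ c₁' c₂' c₃' J₁ J₂ J₃ : ℝ) :
    Matrix (Fin 4) (Fin 4) ℂ :=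
  let w₁ : ℂ := (c₃' : ℂ) - I * J₃
  let w₂p : ℂ := -(c₁' : ℂ) + (J₂ : ℂ) + I * ((c₂' : ℂ) + J₁)
  let w₂m : ℂ := -(c₁' : ℂ) - (J₂ : ℂ) - I * ((c₂' : ℂ) - J₁)
  !![(E₀ : ℂ) - c₃, (c₁ : ℂ) - I * c₂, w₁, w₂p;
     (c₁ : ℂ) + I * c₂, (E₀ : ℂ) + c₃, w₂m, -w₁;
     starRingEnd ℂ w₁, starRingEnd ℂ w₂m, (E₀ : ℂ) + c₃, -(c₁ : ℂ) + I * c₂;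
     starRingEnd ℂ w₂p, -(starRingEnd ℂ w₁), -(c₁ : ℂ) - I * c₂, (E₀ : ℂ) - c₃]

set_option maxHeartbeats 2000000

/-- If the energy–momentum endomorphism `Q` is positive semidefinite, then
`E₀² ≥ L² − 2·V²`. -/
theorem E0_sq_ge_of_posSemidef
    (E₀ c₁ c₂ c₃ c₁' c₂' c₃' J₁ J₂ J₃ L V : ℝ)
    (hL0 : 0 ≤ L)
    (hL : L ^ 2 = ![c₁, c₂, c₃] ⬝ᵥ ![c₁, c₂, c₃]
      + ![c₁', c₂', c₃'] ⬝ᵥ ![c₁', c₂', c₃'] + ![J₁, J₂, J₃] ⬝ᵥ ![J₁, J₂, J₃])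
    (hV : V ^ 3 = ![c₁, c₂, c₃] ⬝ᵥ (![c₁', c₂', c₃'] ⨯₃ ![J₁, J₂, J₃]))
    (hQ : (QMatrix E₀ c₁ c₂ c₃ c₁' c₂' c₃' J₁ J₂ J₃).PosSemidef) :
    E₀ ^ 2 ≥ L ^ 2 - 2 * V ^ 2 := by
  set A := QMatrix E₀ c₁ c₂ c₃ c₁' c₂' c₃' J₁ J₂ J₃ with hA
  set S : ℝ := c₁^2+c₂^2+c₃^2+c₁'^2+c₂'^2+c₃'^2+J₁^2+J₂^2+J₃^2 with hS
  set T : ℝ := c₁*(c₂'*J₃ - c₃'*J₂) + c₂*(c₃'*J₁ - c₁'*J₃) + c₃*(c₁'*J₂ - c₂'*J₁) with hT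
  have hLS : L ^ 2 = S := by
    rw [hL]; simp [dotProduct, Fin.sum_univ_three, hS]; try ring
  have hVT : V ^ 3 = T := by
    rw [hV]; simp [dotProduct, crossProduct, Fin.sum_univ_three, hT]; try ring
  -- traces
  have t1 : A.trace = ((4*E₀ : ℝ) : ℂ) := by
    simp [hA, QMatrix, Matrix.trace, Matrix.diag, Fin.sum_univ_four, Complex.ext_iff,
      ← Complex.ofReal_pow]
    ring
  have t2 : (A^2).trace = ((4*E₀^2 + 4*S : ℝ) : ℂ) := by
    rw [pow_two]
    simp [hA, QMatrix, Matrix.trace, Matrix.diag, Matrix.mul_apply, Fin.sum_univ_four,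
      Complex.ext_iff, ← Complex.ofReal_pow, hS]
    constructor <;> ring
  have t3 : (A^3).trace = ((4*E₀^3 + 12*E₀*S + 24*T : ℝ) : ℂ) := by
    rw [pow_succ, pow_two]
    simp [hA, QMatrix, Matrix.trace, Matrix.diag, Matrix.mul_apply, Fin.sum_univ_four,
      Complex.ext_iff, ← Complex.ofReal_pow, hS, hT]
    constructor <;> ring
  -- eigenvalues
  have hH := hQ.1
  set lam := hH.eigenvalues with hlam
  have hnn : ∀ i, 0 ≤ lam i := fun i => hQ.eigenvalues_nonneg i
  have p1 : lam 0 + lam 1 + lam 2 + lam 3 = 4*E₀ := by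
    have := trace_pow_herm hH 1
    rw [pow_one, t1] at this
    have := Complex.ofReal_inj.mp this.symm
    simpa [Fin.sum_univ_four] using this
  have p2 : (lam 0)^2 + (lam 1)^2 + (lam 2)^2 + (lam 3)^2 = 4*E₀^2 + 4*S := by
    have := trace_pow_herm hH 2
    rw [t2] at this
    have := Complex.ofReal_inj.mp this.symm
    simpa [Fin.sum_univ_four] using this
  have p3 : (lam 0)^3 + (lam 1)^3 + (lam 2)^3 + (lam 3)^3 = 4*E₀^3 + 12*E₀*S + 24*T := by
    have := trace_pow_herm hH 3
    rw [t3] at this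
    have := Complex.ofReal_inj.mp this.symm
    simpa [Fin.sum_univ_four] using this
  have h0 := hnn 0; have h1 := hnn 1; have h2 := hnn 2; have h3 := hnn 3
  clear_value lam
  clear hlam hnn hH t1 t2 t3 hQ hA
  clear A
  have hE0 : 0 ≤ E₀ := by linarith
  have hSnn : 0 ≤ S := by positivity
  -- e2 ≥ 0 : 3 E₀² ≥ S
  have he2 : S ≤ 3 * E₀ ^ 2 := by
    have e2nn : 0 ≤ lam 0 * lam 1 + lam 0 * lam 2 + lam 0 * lam 3
        + lam 1 * lam 2 + lam 1 * lam 3 + lam 2 * lam 3 := by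
      have := mul_nonneg h0 h1
      have := mul_nonneg h0 h2
      have := mul_nonneg h0 h3
      have := mul_nonneg h1 h2
      have := mul_nonneg h1 h3
      have := mul_nonneg h2 h3
      linarith
    have hkey2 : 2*(lam 0 * lam 1 + lam 0 * lam 2 + lam 0 * lam 3
          + lam 1 * lam 2 + lam 1 * lam 3 + lam 2 * lam 3)
        = (lam 0 + lam 1 + lam 2 + lam 3)^2
          - ((lam 0)^2 + (lam 1)^2 + (lam 2)^2 + (lam 3)^2) := by ring
    rw [p1, p2] at hkey2
    linarith [e2nn, hkey2]
  -- e3 ≥ 0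
  have he3 : 0 ≤ E₀^3 - E₀*S + 2*T := by
    have e3nn : 0 ≤ lam 0 * lam 1 * lam 2 + lam 0 * lam 1 * lam 3
        + lam 0 * lam 2 * lam 3 + lam 1 * lam 2 * lam 3 := by
      have := mul_nonneg (mul_nonneg h0 h1) h2
      have := mul_nonneg (mul_nonneg h0 h1) h3
      have := mul_nonneg (mul_nonneg h0 h2) h3
      have := mul_nonneg (mul_nonneg h1 h2) h3
      linarith
    have hkey : 6*(lam 0 * lam 1 * lam 2 + lam 0 * lam 1 * lam 3
          + lam 0 * lam 2 * lam 3 + lam 1 * lam 2 * lam 3)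
        = (lam 0 + lam 1 + lam 2 + lam 3)^3
          - 3*(lam 0 + lam 1 + lam 2 + lam 3)
            *((lam 0)^2 + (lam 1)^2 + (lam 2)^2 + (lam 3)^2)
          + 2*((lam 0)^3 + (lam 1)^3 + (lam 2)^3 + (lam 3)^3) := by ring
    rw [p1, p2, p3] at hkey
    linarith [e3nn, hkey]
  -- V ≤ E₀
  have hT2 : T^2 ≤ (c₁^2+c₂^2+c₃^2) * ((c₁'^2+c₂'^2+c₃'^2) * (J₁^2+J₂^2+J₃^2)) := by
    set n₁ := c₂'*J₃ - c₃'*J₂ with hn1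
    set n₂ := c₃'*J₁ - c₁'*J₃ with hn2
    set n₃ := c₁'*J₂ - c₂'*J₁ with hn3
    have hCS : T^2 ≤ (c₁^2+c₂^2+c₃^2) * (n₁^2+n₂^2+n₃^2) := by
      rw [hT]
      nlinarith [sq_nonneg (c₁*n₂-c₂*n₁), sq_nonneg (c₁*n₃-c₃*n₁), sq_nonneg (c₂*n₃-c₃*n₂)]
    have hN : n₁^2+n₂^2+n₃^2 ≤ (c₁'^2+c₂'^2+c₃'^2) * (J₁^2+J₂^2+J₃^2) := by
      rw [hn1, hn2, hn3]
      nlinarith [sq_nonneg (c₁'*J₁+c₂'*J₂+c₃'*J₃)]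
    calc T^2 ≤ (c₁^2+c₂^2+c₃^2) * (n₁^2+n₂^2+n₃^2) := hCS
    _ ≤ _ := by apply mul_le_mul_of_nonneg_left hN (by positivity)
  have hxyz : (c₁^2+c₂^2+c₃^2) * ((c₁'^2+c₂'^2+c₃'^2) * (J₁^2+J₂^2+J₃^2)) ≤ (E₀^2)^3 := by
    have := amgm3 (x := c₁^2+c₂^2+c₃^2) (y := c₁'^2+c₂'^2+c₃'^2) (z := J₁^2+J₂^2+J₃^2)
      (e := E₀^2) (by positivity) (by positivity) (by positivity) (by rw [hS] at he2; linarith)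
    linarith [this]
  have hVE : V ≤ E₀ := by
    by_contra hc
    push_neg at hc
    have h6 : E₀^6 < V^6 := by
      have := pow_lt_pow_left₀ hc hE0 (n := 6) (by norm_num)
      exact this
    have hV6 : V^6 = T^2 := by rw [show V^6 = (V^3)^2 by ring, hVT]
    nlinarith [hT2, hxyz]
  -- conclude
  rcases eq_or_lt_of_le hE0 with hE0z | hE0pos
  · -- E₀ = 0
    have hS0 : S = 0 := by nlinarith [he2]
    have hx : c₁^2+c₂^2+c₃^2 = 0 := by nlinarith [hS0]
    have hT20 : T^2 = 0 := by
      refine le_antisymm ?_ (sq_nonneg T)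
      calc T^2 ≤ (c₁^2+c₂^2+c₃^2) * ((c₁'^2+c₂'^2+c₃'^2) * (J₁^2+J₂^2+J₃^2)) := hT2
      _ = 0 := by rw [hx, zero_mul]
    have hT0 : T = 0 := by
      have := sq_eq_zero_iff.mp hT20
      exact this
    have hV0 : V = 0 := by
      have h3' : V^3 = 0 := by rw [hVT, hT0]
      exact pow_eq_zero_iff (n := 3) (by norm_num) |>.mp h3'
    rw [hLS, hV0, hS0]
    simp
    positivity
  · have key : 0 ≤ E₀ * (E₀^2 - S + 2*V^2) := by
      have h1' : 0 ≤ 2*V^2*(E₀ - V) := mul_nonneg (by positivity) (sub_nonneg.2 hVE)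
      have hid : E₀ * (E₀^2 - S + 2*V^2) = (E₀^3 - E₀*S + 2*T) + 2*V^2*(E₀ - V) := by
        rw [← hVT]; ring
      linarith [he3, h1', hid.ge, hid.le]
    rw [hLS]
    nlinarith [key, hE0pos]
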